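/- arXiv:1109.2367 — 4 statements merged into one kernel-verified Lean document; each statement's English description precedes it below -/
import Mathlib

section
/- Let R be a commutative ring and x : ℕ → R. With p_{l;n}^{(m)} defined for l ≥ 1 as p_{l;n}^{(m)} = Σ_{r=0}^{n} (−1)^r C(n,r) Σ_{a₁+⋯+a_m = r+l, aᵢ ≥ 1} x_{a₁}⋯x_{a_m}, the following recurrence holds for all m ≥ 2, l ≥ 1, n ≥ 1: p_{l;n}^{(m)} = Σ_{t=1}^{l−1} p_{t;0}^{(m−1)} · p_{l−t;n}^{(1)} − Σ_{k=0}^{n−1} p_{1;k}^{(1)} · p_{l;n−k−1}^{(m−1)}. -/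
/-- Sum over all compositions `(a₁,…,a_m)` of `N` into `m` positive parts of the
monomials `x_{a₁}⋯x_{a_m}`. -/
noncomputable def compSum {R : Type*} [CommRing R] (x : ℕ → R) (m N : ℕ) : R :=
  ∑ a ∈ (Finset.Nat.antidiagonalTuple m N).filter (fun a => ∀ i, 1 ≤ a i),
    ∏ i, x (a i)

/-- `p_{l;n}^{(m)} = Σ_{r=0}^{n} (−1)^r C(n,r) Σ_{a₁+⋯+a_m=r+l, aᵢ≥1} x_{a₁}⋯x_{a_m}`. -/
noncomputable def pP {R : Type*} [CommRing R] (x : ℕ → R) (l n m : ℕ) : R :=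
  ∑ r ∈ Finset.range (n + 1), (-1 : R) ^ r * (n.choose r : R) * compSum x m (r + l)

section aux

variable {R : Type*} [CommRing R] (x : ℕ → R)

lemma compSum_one_zero : compSum x 1 0 = 0 := by
  rw [compSum, Finset.Nat.antidiagonalTuple_one, Finset.filter_singleton]
  rw [if_neg]
  · simp
  · intro h
    simpa using h 0

lemma compSum_one_pos (N : ℕ) (hN : 1 ≤ N) : compSum x 1 N = x N := by
  rw [compSum, Finset.Nat.antidiagonalTuple_one, Finset.filter_singleton, if_pos]
  · simp
  · intro i
    fin_cases i
    simpa using hN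

lemma compSum_zero_right (m : ℕ) (hm : 1 ≤ m) : compSum x m 0 = 0 := by
  rw [compSum, Finset.filter_eq_empty_iff.2, Finset.sum_empty]
  intro a ha h
  rw [Finset.Nat.mem_antidiagonalTuple] at ha
  have h0 : a ⟨0, hm⟩ = 0 := by
    have := Finset.single_le_sum (f := a) (fun i _ => Nat.zero_le _)
      (Finset.mem_univ ⟨0, hm⟩)
    omega
  have := h ⟨0, hm⟩
  omega

lemma compSum_conv (m N : ℕ) :
    compSum x (m + 1) N =
      ∑ ab ∈ Finset.HasAntidiagonal.antidiagonal N, compSum x 1 ab.1 * compSum x m ab.2 := by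
  rw [← Finset.sum_filter_of_ne
    (p := fun ab : ℕ × ℕ => 1 ≤ ab.1)
    (hp := by
      intro ab _ hne
      by_contra h
      have h1 : ab.1 = 0 := by omega
      rw [h1, compSum_one_zero] at hne
      simp at hne)]
  have hstep : ∀ ab ∈ (Finset.HasAntidiagonal.antidiagonal N).filter (fun ab : ℕ × ℕ => 1 ≤ ab.1),
      compSum x 1 ab.1 * compSum x m ab.2 =
        ∑ b ∈ (Finset.Nat.antidiagonalTuple m ab.2).filter (fun b => ∀ i, 1 ≤ b i),
          x ab.1 * ∏ i, x (b i) := by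
    intro ab hab
    rw [Finset.mem_filter] at hab
    rw [compSum_one_pos x ab.1 hab.2, compSum, Finset.mul_sum]
  rw [Finset.sum_congr rfl hstep, Finset.sum_sigma']
  rw [compSum]
  refine Finset.sum_nbij' (fun a => (⟨(a 0, N - a 0), Fin.tail a⟩ :
      (_ : ℕ × ℕ) × (Fin m → ℕ))) (fun p => Fin.cons p.1.1 p.2) ?_ ?_ ?_ ?_ ?_
  · intro a ha
    simp only [Finset.mem_sigma, Finset.mem_filter, Finset.HasAntidiagonal.mem_antidiagonal,
      Finset.Nat.mem_antidiagonalTuple] at ha ⊢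
    obtain ⟨hsum, hpos⟩ := ha
    have hle : a 0 ≤ N := by
      rw [← hsum]
      exact Finset.single_le_sum (f := a) (fun i _ => Nat.zero_le _) (Finset.mem_univ 0)
    have htail : ∑ i, Fin.tail a i = N - a 0 := by
      have hs := Fin.sum_univ_succ a
      rw [hsum] at hs
      have : ∀ i : Fin m, Fin.tail a i = a i.succ := fun i => rfl
      rw [Finset.sum_congr rfl fun i _ => this i]
      omega
    exact ⟨⟨by omega, hpos 0⟩, htail, fun i => hpos i.succ⟩
  · rintro ⟨⟨a, b⟩, c⟩ hp
    simp only [Finset.mem_sigma, Finset.mem_filter, Finset.HasAntidiagonal.mem_antidiagonal,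
      Finset.Nat.mem_antidiagonalTuple] at hp ⊢
    obtain ⟨⟨hab, ha⟩, hc, hpos⟩ := hp
    constructor
    · rw [Fin.sum_cons, hc, hab]
    · intro i
      refine Fin.cases ?_ ?_ i
      · simpa using ha
      · intro j
        simpa using hpos j
  · intro a _
    simp [Fin.cons_self_tail]
  · rintro ⟨⟨a, b⟩, c⟩ hp
    simp only [Finset.mem_sigma, Finset.mem_filter, Finset.HasAntidiagonal.mem_antidiagonal,
      Finset.Nat.mem_antidiagonalTuple] at hp
    obtain ⟨⟨hab, _⟩, _, _⟩ := hp
    simp only [Fin.cons_zero, Fin.tail_cons]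
    have hb : N - a = b := by omega
    simp [hb]
  · intro a _
    rw [Fin.prod_univ_succ]
    rfl

lemma pP_zero_n (l m : ℕ) : pP x l 0 m = compSum x m l := by
  simp [pP]

lemma pP_pascal (l n m : ℕ) :
    pP x l (n + 1) m = pP x l n m - pP x (l + 1) n m := by
  have key : pP x l n m = ∑ r ∈ Finset.range (n + 2),
      ((-1 : R) ^ r * (n.choose r : R) * compSum x m (r + l)) := by
    rw [Finset.sum_range_succ, pP]
    simp [Nat.choose_succ_self]
  have hL : pP x l (n + 1) m =
      (∑ r ∈ Finset.range (n + 1),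
        (-1 : R) ^ (r + 1) * (((n + 1).choose (r + 1)) : R) * compSum x m (r + 1 + l)) +
        (-1 : R) ^ 0 * (((n + 1).choose 0) : R) * compSum x m (0 + l) := by
    rw [pP, Finset.sum_range_succ' _ (n + 1)]
  have hR : pP x l n m =
      (∑ r ∈ Finset.range (n + 1),
        (-1 : R) ^ (r + 1) * ((n.choose (r + 1)) : R) * compSum x m (r + 1 + l)) +
        (-1 : R) ^ 0 * ((n.choose 0) : R) * compSum x m (0 + l) := by
    rw [key, Finset.sum_range_succ' _ (n + 1)]
  have hP : pP x (l + 1) n m =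
      ∑ r ∈ Finset.range (n + 1), (-1 : R) ^ r * (n.choose r : R) * compSum x m (r + 1 + l) := by
    rw [pP]
    refine Finset.sum_congr rfl fun r _ => ?_
    congr 2
    omega
  rw [hL, hR, hP]
  have hsum : ∑ r ∈ Finset.range (n + 1),
      (-1 : R) ^ (r + 1) * (((n + 1).choose (r + 1)) : R) * compSum x m (r + 1 + l) =
      ∑ r ∈ Finset.range (n + 1),
        ((-1 : R) ^ (r + 1) * ((n.choose (r + 1)) : R) * compSum x m (r + 1 + l) -
          (-1 : R) ^ r * ((n.choose r) : R) * compSum x m (r + 1 + l)) := by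
    refine Finset.sum_congr rfl fun r _ => ?_
    rw [Nat.choose_succ_succ]
    push_cast
    ring
  rw [hsum, Finset.sum_sub_distrib]
  simp only [Nat.choose_zero_right, Nat.cast_one]
  ring

lemma compSum_split (m l : ℕ) (hm : 2 ≤ m) (hl : 1 ≤ l) :
    compSum x m l = ∑ t ∈ Finset.Icc 1 (l - 1), compSum x (m - 1) t * x (l - t) := by
  obtain ⟨k, rfl⟩ : ∃ k, m = k + 2 := ⟨m - 2, by omega⟩
  have h1 : compSum x (k + 2) l =
      ∑ a ∈ Finset.range (l + 1), compSum x 1 a * compSum x (k + 1) (l - a) := by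
    rw [compSum_conv x (k + 1) l, Finset.Nat.sum_antidiagonal_eq_sum_range_succ_mk]
  rw [h1]
  have hsub : Finset.Icc 1 (l - 1) ⊆ Finset.range (l + 1) := by
    intro a ha
    rw [Finset.mem_Icc] at ha
    rw [Finset.mem_range]
    omega
  have hzero : ∀ a ∈ Finset.range (l + 1), a ∉ Finset.Icc 1 (l - 1) →
      compSum x 1 a * compSum x (k + 1) (l - a) = 0 := by
    intro a ha hna
    rw [Finset.mem_range] at ha
    rw [Finset.mem_Icc] at hna
    rcases Nat.eq_zero_or_pos a with h0 | h0
    · rw [h0, compSum_one_zero, zero_mul]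
    · have : a = l := by omega
      rw [this, Nat.sub_self, compSum_zero_right x (k + 1) (by omega), mul_zero]
  have h2 : ∑ a ∈ Finset.range (l + 1), compSum x 1 a * compSum x (k + 1) (l - a) =
      ∑ a ∈ Finset.Icc 1 (l - 1), x a * compSum x (k + 1) (l - a) := by
    rw [← Finset.sum_subset hsub hzero]
    refine Finset.sum_congr rfl fun a ha => ?_
    rw [Finset.mem_Icc] at ha
    rw [compSum_one_pos x a ha.1]
  rw [h2]
  refine Finset.sum_nbij' (fun a => l - a) (fun t => l - t) ?_ ?_ ?_ ?_ ?_ <;>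
      intro a ha <;> rw [Finset.mem_Icc] at ha
  · rw [Finset.mem_Icc]; omega
  · rw [Finset.mem_Icc]; omega
  · omega
  · omega
  · have h3 : l - (l - a) = a := by omega
    rw [h3, mul_comm]
    norm_num

end aux

lemma stmt6_aux {R : Type*} [CommRing R] (x : ℕ → R) (m : ℕ) (hm : 2 ≤ m) :
    ∀ (n l : ℕ), 1 ≤ l →
    pP x l n m =
      (∑ t ∈ Finset.Icc 1 (l - 1), pP x t 0 (m - 1) * pP x (l - t) n 1) -
        ∑ k ∈ Finset.range n, pP x 1 k 1 * pP x l (n - k - 1) (m - 1) := by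
  intro n
  induction n with
  | zero =>
    intro l hl
    rw [Finset.range_zero, Finset.sum_empty, sub_zero, pP_zero_n,
      compSum_split x m l hm hl]
    refine Finset.sum_congr rfl fun t ht => ?_
    rw [Finset.mem_Icc] at ht
    rw [pP_zero_n, pP_zero_n, compSum_one_pos x (l - t) (by omega)]
  | succ n ih =>
    intro l hl
    have hl1 : (1 : ℕ) ≤ l + 1 := by omega
    -- abbreviations
    have E0 : pP x l (n + 1) m = pP x l n m - pP x (l + 1) n m := pP_pascal x l n m
    rw [E0, ih l hl, ih (l + 1) hl1]
    have hsub : (l + 1) - 1 = l := by omega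
    rw [hsub]
    -- E1 : T1 (n+1) l
    have E1 : ∑ t ∈ Finset.Icc 1 (l - 1), pP x t 0 (m - 1) * pP x (l - t) (n + 1) 1 =
        (∑ t ∈ Finset.Icc 1 (l - 1), pP x t 0 (m - 1) * pP x (l - t) n 1) -
          ∑ t ∈ Finset.Icc 1 (l - 1), pP x t 0 (m - 1) * pP x (l + 1 - t) n 1 := by
      rw [← Finset.sum_sub_distrib]
      refine Finset.sum_congr rfl fun t ht => ?_
      rw [Finset.mem_Icc] at ht
      rw [pP_pascal]
      have : l - t + 1 = l + 1 - t := by omega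
      rw [this]
      ring
    -- E2 : T1 n (l+1)
    have E2 : ∑ t ∈ Finset.Icc 1 l, pP x t 0 (m - 1) * pP x (l + 1 - t) n 1 =
        (∑ t ∈ Finset.Icc 1 (l - 1), pP x t 0 (m - 1) * pP x (l + 1 - t) n 1) +
          pP x l 0 (m - 1) * pP x 1 n 1 := by
      have hIl : Finset.Icc 1 l = Finset.Icc 1 (l - 1 + 1) := by
        rw [Nat.sub_add_cancel hl]
      rw [hIl, Finset.sum_Icc_succ_top (by omega)]
      have h4 : l - 1 + 1 = l := Nat.sub_add_cancel hl
      rw [h4]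
      have h7 : l + 1 - l = 1 := by omega
      rw [h7]
    -- E3 : T2 (n+1) l
    have E3 : ∑ k ∈ Finset.range (n + 1), pP x 1 k 1 * pP x l (n + 1 - k - 1) (m - 1) =
        ((∑ k ∈ Finset.range n, pP x 1 k 1 * pP x l (n - k - 1) (m - 1)) -
          ∑ k ∈ Finset.range n, pP x 1 k 1 * pP x (l + 1) (n - k - 1) (m - 1)) +
          pP x 1 n 1 * pP x l 0 (m - 1) := by
      rw [Finset.sum_range_succ]
      have h5 : n + 1 - n - 1 = 0 := by omega
      rw [h5, ← Finset.sum_sub_distrib]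
      congr 1
      refine Finset.sum_congr rfl fun k hk => ?_
      rw [Finset.mem_range] at hk
      have h6 : n + 1 - k - 1 = (n - k - 1) + 1 := by omega
      rw [h6, pP_pascal]
      ring
    rw [E1, E2, E3]
    ring

theorem stmt6 (R : Type*) [CommRing R] (x : ℕ → R) (m l n : ℕ)
    (hm : 2 ≤ m) (hl : 1 ≤ l) (hn : 1 ≤ n) :
    pP x l n m =
      (∑ t ∈ Finset.Icc 1 (l - 1), pP x t 0 (m - 1) * pP x (l - t) n 1) -
        ∑ k ∈ Finset.range n, pP x 1 k 1 * pP x l (n - k - 1) (m - 1) :=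
  stmt6_aux x m hm n l hl
end

section
/- Let R be a commutative ring and x : ℕ → R. For l ≥ 1 define p_{l;n}^{(m)} = Σ_{r=0}^{n} (−1)^r C(n,r) Σ_{a₁+⋯+a_m = r+l, aᵢ ≥ 1} x_{a₁}⋯x_{a_m}, and define p_{0;n}^{(m)} = (−1)^{m−1} x₀^m + Σ_{r=1}^{n} (−1)^r C(n,r) Σ_{a₁+⋯+a_m = r, aᵢ ≥ 1} x_{a₁}⋯x_{a_m}. Then for all m ≥ 2 and n ≥ 1: p_{0;n}^{(m)} = (−1)^{m−1} x₀^{m−1} · p_{0;n−1}^{(1)} − Σ_{k=0}^{n−2} p_{1;k}^{(1)} · p_{0;n−1−k}^{(m−1)}. -/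
/-- `p_{0;n}^{(m)} = (−1)^{m−1} x₀^m + Σ_{r=1}^{n} (−1)^r C(n,r) Σ_{a₁+⋯+a_m=r, aᵢ≥1} x_{a₁}⋯x_{a_m}`. -/
noncomputable def p0 {R : Type*} [CommRing R] (x : ℕ → R) (n m : ℕ) : R :=
  (-1 : R) ^ (m - 1) * x 0 ^ m +
    ∑ r ∈ Finset.Icc 1 n, (-1 : R) ^ r * (n.choose r : R) * compSum x m r

namespace Stmt7Aux

open Finset

variable {R : Type*} [CommRing R]

/-- The signed binomial transform. -/
noncomputable def Tb (f : ℕ → R) (n : ℕ) : R :=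
  ∑ r ∈ Finset.range (n+1), (-1:R)^r * (n.choose r : R) * f r

/-- Convolution. -/
noncomputable def cv (f g : ℕ → R) (u : ℕ) : R :=
  ∑ i ∈ Finset.range (u+1), f i * g (u - i)

lemma Tb_zero (f : ℕ → R) : Tb f 0 = f 0 := by simp [Tb]
lemma cv_zero (f g : ℕ → R) : cv f g 0 = f 0 * g 0 := by simp [cv]

lemma Tb_succ (f : ℕ → R) (n : ℕ) :
    Tb f (n+1) = Tb f n - Tb (fun r => f (r+1)) n := by
  have e1 : Tb f (n+1)
      = (∑ i ∈ range (n+1), (-1:R)^(i+1) * (((n+1).choose (i+1) : ℕ) : R) * f (i+1)) + f 0 := by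
    rw [Tb, Finset.sum_range_succ']; simp
  have e2 : Tb f n
      = (∑ i ∈ range (n+1), (-1:R)^(i+1) * ((n.choose (i+1) : ℕ) : R) * f (i+1)) + f 0 := by
    rw [Finset.sum_range_succ]
    simp only [Nat.choose_succ_self, Nat.cast_zero, mul_zero, zero_mul, add_zero]
    rw [Tb, Finset.sum_range_succ']; simp
  have e3 : Tb (fun r => f (r+1)) n = ∑ i ∈ range (n+1), (-1:R)^i * (n.choose i : R) * f (i+1) :=
    rfl
  have key : (∑ i ∈ range (n+1), (-1:R)^(i+1) * (((n+1).choose (i+1) : ℕ) : R) * f (i+1))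
      = ∑ i ∈ range (n+1), ((-1:R)^(i+1) * ((n.choose (i+1) : ℕ) : R) * f (i+1)
          - (-1:R)^i * (n.choose i : R) * f (i+1)) := by
    refine Finset.sum_congr rfl fun i _ => ?_
    rw [Nat.choose_succ_succ]
    push_cast
    ring
  rw [e1, e2, e3, key, Finset.sum_sub_distrib]
  ring

lemma cv_shift (f g : ℕ → R) (u : ℕ) :
    cv f (fun s => g (s+1)) u = cv f g (u+1) - f (u+1) * g 0 := by
  have h : cv f g (u+1) = cv f (fun s => g (s+1)) u + f (u+1) * g 0 := by
    rw [cv, Finset.sum_range_succ, cv]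
    congr 1
    · refine Finset.sum_congr rfl fun i hi => ?_
      rw [Finset.mem_range] at hi
      congr 2
      omega
    · simp
  rw [h]; ring

lemma Tb_shift_sum (f : ℕ → R) (n : ℕ) :
    ∑ u ∈ range (n+1), (-1:R)^u * ((n+1).choose (u+1) : R) * f (u+1)
      = f 0 - Tb f (n+1) := by
  have h : Tb f (n+1)
      = (∑ u ∈ range (n+1), (-1:R)^(u+1) * (((n+1).choose (u+1) : ℕ) : R) * f (u+1)) + f 0 := by
    rw [Tb, Finset.sum_range_succ']; simp
  have h2 : ∀ u ∈ range (n+1), (-1:R)^u * (((n+1).choose (u+1) : ℕ) : R) * f (u+1)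
      = -((-1:R)^(u+1) * (((n+1).choose (u+1) : ℕ) : R) * f (u+1)) := fun u _ => by ring
  rw [Finset.sum_congr rfl h2, Finset.sum_neg_distrib, h]
  ring

lemma Tb_conv (f : ℕ → R) : ∀ (n : ℕ) (g : ℕ → R),
    ∑ k ∈ range (n+1), Tb f k * Tb g (n-k)
      = ∑ u ∈ range (n+1), (-1:R)^u * (((n+1).choose (u+1) : ℕ) : R) * cv f g u := by
  intro n
  induction n with
  | zero => intro g; simp [Tb_zero, cv_zero]
  | succ n IH =>
    intro g
    have hstep : ∀ k ∈ range (n+1), Tb f k * Tb g (n+1-k)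
        = Tb f k * Tb g (n-k) - Tb f k * Tb (fun s => g (s+1)) (n-k) := by
      intro k hk
      rw [Finset.mem_range] at hk
      have h1 : n + 1 - k = (n - k) + 1 := by omega
      rw [h1, Tb_succ]; ring
    have hL : ∑ k ∈ range (n+1+1), Tb f k * Tb g (n+1-k)
        = (∑ k ∈ range (n+1), Tb f k * Tb g (n-k))
          - (∑ k ∈ range (n+1), Tb f k * Tb (fun s => g (s+1)) (n-k))
          + Tb f (n+1) * Tb g 0 := by
      rw [Finset.sum_range_succ, Finset.sum_congr rfl hstep, Finset.sum_sub_distrib]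
      simp
    rw [hL, IH g, IH (fun s => g (s+1)), Tb_zero]
    have hcv : ∀ u ∈ range (n+1),
        (-1:R)^u * (((n+1).choose (u+1):ℕ):R) * cv f (fun s => g (s+1)) u
        = (-1:R)^u * (((n+1).choose (u+1):ℕ):R) * cv f g (u+1)
          - ((-1:R)^u * (((n+1).choose (u+1):ℕ):R) * f (u+1)) * g 0 := by
      intro u _; rw [cv_shift]; ring
    rw [Finset.sum_congr rfl hcv, Finset.sum_sub_distrib, ← Finset.sum_mul, Tb_shift_sum,
      Tb_shift_sum]
    have hsplit : ∀ u ∈ range (n+1+1), (-1:R)^u * (((n+1+1).choose (u+1):ℕ):R) * cv f g u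
        = (-1:R)^u * (((n+1).choose (u+1):ℕ):R) * cv f g u
          + (-1:R)^u * (((n+1).choose u:ℕ):R) * cv f g u := by
      intro u _
      rw [show (n+1+1).choose (u+1) = (n+1).choose u + (n+1).choose (u+1) from
        Nat.choose_succ_succ _ _]
      push_cast; ring
    have hA : ∑ u ∈ range (n+1+1), (-1:R)^u * (((n+1).choose (u+1):ℕ):R) * cv f g u
        = ∑ u ∈ range (n+1), (-1:R)^u * (((n+1).choose (u+1):ℕ):R) * cv f g u := by
      rw [Finset.sum_range_succ]
      simp [Nat.choose_succ_self]
    have hB : ∑ u ∈ range (n+1+1), (-1:R)^u * (((n+1).choose u:ℕ):R) * cv f g u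
        = Tb (cv f g) (n+1) := rfl
    rw [Finset.sum_congr rfl hsplit, Finset.sum_add_distrib, hA, hB, cv_zero]
    ring

lemma Tb_congr_pos (g h : ℕ → R) (hgh : ∀ r, r ≠ 0 → g r = h r) (N : ℕ) :
    Tb g N = Tb h N + (g 0 - h 0) := by
  rw [Tb, Tb]
  have key : ∀ r ∈ range (N+1), (-1:R)^r * (N.choose r : R) * g r
      = (-1:R)^r * (N.choose r : R) * h r + (if r = 0 then g 0 - h 0 else 0) := by
    intro r _
    rcases Nat.eq_zero_or_pos r with h0 | h0
    · subst h0; simp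
    · rw [hgh r (by omega), if_neg (by omega)]; ring
  rw [Finset.sum_congr rfl key, Finset.sum_add_distrib, Finset.sum_ite_eq' (range (N+1)) 0]
  simp

/-! ### compSum lemmas -/

variable (x : ℕ → R)

lemma compSum_one (N : ℕ) : compSum x 1 N = if N = 0 then 0 else x N := by
  rw [compSum, Finset.Nat.antidiagonalTuple_one, Finset.filter_singleton]
  have h : (∀ i : Fin 1, 1 ≤ ![N] i) ↔ 1 ≤ N := by
    constructor
    · intro h; simpa using h 0
    · intro h i; fin_cases i; simpa
  by_cases hN : N = 0 <;> simp [h, hN, Nat.one_le_iff_ne_zero]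

lemma compSum_zero_right (k : ℕ) : compSum x (k+1) 0 = 0 := by
  rw [compSum, Finset.Nat.antidiagonalTuple_zero_right]
  have : ¬ (∀ i : Fin (k+1), 1 ≤ (0 : Fin (k+1) → ℕ) i) := by
    intro h; simpa using h 0
  simp [Finset.filter_singleton, this]

lemma compSum_succ (k N : ℕ) :
    compSum x (k+1) N = ∑ i ∈ range (N+1), compSum x 1 i * compSum x k (N-i) := by
  have h0 : ∑ i ∈ range (N+1), compSum x 1 i * compSum x k (N-i)
      = ∑ i ∈ (range (N+1)).filter (fun i => i ≠ 0), x i * compSum x k (N-i) := by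
    rw [Finset.sum_filter]
    refine Finset.sum_congr rfl fun i _ => ?_
    rw [compSum_one]
    by_cases hi : i = 0 <;> simp [hi]
  have h1 : ∑ i ∈ (range (N+1)).filter (fun i => i ≠ 0), x i * compSum x k (N-i)
      = ∑ i ∈ (range (N+1)).filter (fun i => i ≠ 0),
          ∑ b ∈ (Finset.Nat.antidiagonalTuple k (N-i)).filter (fun b => ∀ j, 1 ≤ b j),
            x i * ∏ j, x (b j) := by
    refine Finset.sum_congr rfl fun i _ => ?_
    rw [compSum, Finset.mul_sum]
  rw [h0, h1, Finset.sum_sigma']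
  · rw [compSum]
    refine Finset.sum_nbij' (i := fun a => (⟨a 0, Fin.tail a⟩ : (_ : ℕ) × (Fin k → ℕ)))
      (j := fun p => Fin.cons p.1 p.2) ?_ ?_ ?_ ?_ ?_
    · intro a ha
      rw [Finset.mem_filter, Finset.Nat.mem_antidiagonalTuple] at ha
      obtain ⟨hsum, hpos⟩ := ha
      rw [Finset.mem_sigma, Finset.mem_filter, Finset.mem_range, Finset.mem_filter,
        Finset.Nat.mem_antidiagonalTuple]
      dsimp only
      have hs : a 0 + ∑ j, Fin.tail a j = N := by
        rw [← Fin.sum_cons (a 0) (Fin.tail a), Fin.cons_self_tail, hsum]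
      refine ⟨⟨?_, Nat.one_le_iff_ne_zero.mp (hpos 0)⟩, ?_, fun j => hpos j.succ⟩
      · omega
      · omega
    · rintro ⟨i, b⟩ hp
      dsimp only
      rw [Finset.mem_sigma, Finset.mem_filter, Finset.mem_range, Finset.mem_filter,
        Finset.Nat.mem_antidiagonalTuple] at hp
      dsimp only at hp
      obtain ⟨⟨hiN, hi0⟩, hbsum, hbpos⟩ := hp
      rw [Finset.mem_filter, Finset.Nat.mem_antidiagonalTuple]
      constructor
      · rw [Fin.sum_cons, hbsum]; omega
      · intro j
        refine Fin.cases ?_ ?_ j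
        · simpa using Nat.one_le_iff_ne_zero.mpr hi0
        · intro j'; simpa using hbpos j'
    · intro a _
      simp [Fin.cons_self_tail]
    · rintro ⟨i, b⟩ _
      simp [Fin.tail_cons]
    · intro a _
      dsimp only
      rw [Fin.prod_univ_succ]
      rfl

/-- The "corrected" sequence whose binomial transform is `p0`. -/
noncomputable def ghat (m : ℕ) : ℕ → R :=
  fun s => if s = 0 then (-1:R)^(m-1) * x 0 ^ m else compSum x m s

lemma ghat_zero (m : ℕ) : ghat x m 0 = (-1:R)^(m-1) * x 0 ^ m := by simp [ghat]

lemma ghat_pos (m s : ℕ) (hs : s ≠ 0) : ghat x m s = compSum x m s := by simp [ghat, hs]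

lemma p0_eq (n m : ℕ) : p0 x n m = Tb (ghat x m) n := by
  have h1 : ∑ r ∈ Finset.Icc 1 n, (-1:R)^r * (n.choose r : R) * compSum x m r
      = ∑ i ∈ range n, (-1:R)^(1+i) * (n.choose (1+i) : R) * compSum x m (1+i) := by
    rw [← Finset.Ico_add_one_right_eq_Icc, Finset.sum_Ico_eq_sum_range]
    simp
  have h2 : Tb (ghat x m) n
      = (∑ i ∈ range n, (-1:R)^(i+1) * (n.choose (i+1) : R) * ghat x m (i+1))
        + (-1:R)^(m-1) * x 0 ^ m := by
    rw [Tb, Finset.sum_range_succ']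
    simp [ghat]
  rw [p0, h1, h2]
  rw [Finset.sum_congr rfl (fun i _ => by rw [add_comm 1 i] :
    ∀ i ∈ range n, (-1:R)^(1+i) * (n.choose (1+i) : R) * compSum x m (1+i)
      = (-1:R)^(i+1) * (n.choose (i+1) : R) * compSum x m (i+1))]
  have h3 : ∀ i ∈ range n, (-1:R)^(i+1) * (n.choose (i+1) : R) * compSum x m (i+1)
      = (-1:R)^(i+1) * (n.choose (i+1) : R) * ghat x m (i+1) := by
    intro i _
    rw [ghat_pos x m (i+1) (by omega)]
  rw [Finset.sum_congr rfl h3]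
  ring

lemma pP_eq (k : ℕ) : pP x 1 k 1 = Tb (fun r => compSum x 1 (r+1)) k := rfl

lemma cv_key (k u : ℕ) :
    cv (fun r => compSum x 1 (r+1)) (ghat x (k+1)) u
      = compSum x (k+2) (u+1) + (-1:R)^k * x 0 ^ (k+1) * compSum x 1 (u+1) := by
  rw [cv, Finset.sum_range_succ, Nat.sub_self]
  have hmain : ∑ i ∈ range u, compSum x 1 (i+1) * ghat x (k+1) (u-i)
      = compSum x (k+2) (u+1) := by
    have e : compSum x (k+2) (u+1)
        = ∑ i ∈ range (u+1+1), compSum x 1 i * compSum x (k+1) (u+1-i) :=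
      compSum_succ x (k+1) (u+1)
    rw [e, Finset.sum_range_succ', Finset.sum_range_succ]
    simp only [compSum_one, if_pos rfl, Nat.add_sub_cancel, zero_mul, add_zero,
      Nat.sub_self, compSum_zero_right, mul_zero]
    refine (Finset.sum_congr rfl fun i hi => ?_).symm
    rw [Finset.mem_range] at hi
    have h2 : u + 1 - (i+1) = u - i := by omega
    rw [h2, ghat_pos x (k+1) (u-i) (by omega)]
  rw [hmain]
  rw [ghat_zero]
  simp only [Nat.add_sub_cancel]
  ring

end Stmt7Aux

open Stmt7Aux Finset in
theorem stmt7 (R : Type*) [CommRing R] (x : ℕ → R) (m n : ℕ) (hm : 2 ≤ m) (hn : 1 ≤ n) :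
    p0 x n m =
      (-1 : R) ^ (m - 1) * x 0 ^ (m - 1) * p0 x (n - 1) 1 -
        ∑ k ∈ Finset.range (n - 1), pP x 1 k 1 * p0 x (n - 1 - k) (m - 1) := by
  obtain ⟨k, rfl⟩ : ∃ k, m = k + 2 := ⟨m - 2, by omega⟩
  obtain ⟨n', rfl⟩ : ∃ n', n = n' + 1 := ⟨n - 1, by omega⟩
  simp only [show k + 2 - 1 = k + 1 by omega, show n' + 1 - 1 = n' by omega]
  set f : ℕ → R := fun r => compSum x 1 (r+1) with hf
  have HS : ∑ j ∈ Finset.range n', pP x 1 j 1 * p0 x (n' - j) (k+1)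
      = ∑ j ∈ Finset.range n', Tb f j * Tb (ghat x (k+1)) (n'-j) := by
    refine Finset.sum_congr rfl fun j _ => ?_
    rw [pP_eq, p0_eq]
  have H4 := Tb_conv f n' (ghat x (k+1))
  have H5 : ∑ j ∈ range (n'+1), Tb f j * Tb (ghat x (k+1)) (n'-j)
      = (∑ j ∈ range n', Tb f j * Tb (ghat x (k+1)) (n'-j))
        + Tb f n' * Tb (ghat x (k+1)) 0 := by
    rw [Finset.sum_range_succ, Nat.sub_self]
  have H14 : Tb (ghat x (k+1)) 0 = (-1:R)^k * x 0 ^ (k+1) := by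
    rw [Tb_zero, ghat_zero]; simp
  have H6 : ∑ u ∈ range (n'+1), (-1:R)^u * (((n'+1).choose (u+1):ℕ):R) * cv f (ghat x (k+1)) u
      = (∑ u ∈ range (n'+1), (-1:R)^u * (((n'+1).choose (u+1):ℕ):R) * compSum x (k+2) (u+1))
        + (-1:R)^k * x 0 ^ (k+1)
          * (∑ u ∈ range (n'+1), (-1:R)^u * (((n'+1).choose (u+1):ℕ):R) * compSum x 1 (u+1)) := by
    rw [Finset.mul_sum, ← Finset.sum_add_distrib]
    refine Finset.sum_congr rfl fun u _ => ?_
    rw [hf, cv_key]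
    ring
  have H7 : ∑ u ∈ range (n'+1), (-1:R)^u * (((n'+1).choose (u+1):ℕ):R) * compSum x (k+2) (u+1)
      = - Tb (fun v => compSum x (k+2) v) (n'+1) := by
    rw [Tb_shift_sum (fun v => compSum x (k+2) v) n']
    rw [show compSum x (k+2) 0 = 0 from compSum_zero_right x (k+1)]
    ring
  have H8 : ∑ u ∈ range (n'+1), (-1:R)^u * (((n'+1).choose (u+1):ℕ):R) * compSum x 1 (u+1)
      = - Tb (fun v => compSum x 1 v) (n'+1) := by
    rw [Tb_shift_sum (fun v => compSum x 1 v) n']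
    rw [show compSum x 1 0 = 0 from compSum_zero_right x 0]
    ring
  have H11 : Tb (fun v => compSum x (k+2) v) (n'+1)
      = Tb (ghat x (k+2)) (n'+1) - (-1:R)^(k+1) * x 0 ^ (k+2) := by
    rw [Tb_congr_pos (fun v => compSum x (k+2) v) (ghat x (k+2))
      (fun r hr => (ghat_pos x (k+2) r hr).symm) (n'+1)]
    rw [show compSum x (k+2) 0 = 0 from compSum_zero_right x (k+1)]
    rw [show ghat x (k+2) 0 = (-1:R)^(k+1) * x 0 ^ (k+2) by rw [ghat_zero]; norm_num]
    ring
  have H12 : Tb (fun v => compSum x 1 v) (n'+1)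
      = Tb (ghat x 1) (n'+1) - x 0 := by
    rw [Tb_congr_pos (fun v => compSum x 1 v) (ghat x 1)
      (fun r hr => (ghat_pos x 1 r hr).symm) (n'+1)]
    rw [show compSum x 1 0 = 0 from compSum_zero_right x 0]
    rw [show ghat x 1 0 = x 0 by rw [ghat_zero]; norm_num]
    ring
  have H13 : Tb (ghat x 1) (n'+1) = Tb (ghat x 1) n' - Tb f n' := by
    have hfe : (fun r => ghat x 1 (r+1)) = f := by
      funext r
      rw [hf]
      exact ghat_pos x 1 (r+1) (by omega)
    rw [Tb_succ, hfe]
  rw [p0_eq x (n'+1) (k+2), p0_eq x n' 1, HS]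
  linear_combination - H5 + H4 + H6 + H7 - H11
    + (-1:R)^k * x 0 ^ (k+1) * H8 - (-1:R)^k * x 0 ^ (k+1) * H12
    - (-1:R)^k * x 0 ^ (k+1) * H13 - Tb f n' * H14
end

section
/- Let A be a bialgebra over a commutative ring R with coproduct Δ, let c ∈ R, and let e, f, t ∈ A with Δ(e) = e⊗1 + 1⊗e, Δ(f) = f⊗1 + 1⊗f, and Δ(t) = t⊗1 + 1⊗t − c·(f⊗e). Then for every k ≥ 1, the iterated coproduct Δ^{(k)} : A → A^{⊗k} satisfies Δ^{(k)}(t) = Σ_{a=1}^{k} t^{(a)} − c·Σ_{1 ≤ a < b ≤ k} f^{(a)}·e^{(b)}, where x^{(a)} = 1^{⊗(a−1)} ⊗ x ⊗ 1^{⊗(k−a)}. -/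
open scoped TensorProduct
open PiTensorProduct

section

variable (R A : Type*) [CommRing R] [Ring A] [Algebra R A]

/-- The linear map `A ⊗ A^{⊗n} → A^{⊗(n+1)}`, `a ⊗ (x₁ ⊗ ⋯ ⊗ xₙ) ↦ a ⊗ x₁ ⊗ ⋯ ⊗ xₙ`. -/
noncomputable def consStep (n : ℕ) :
    A ⊗[R] (⨂[R] (_ : Fin n), A) →ₗ[R] ⨂[R] (_ : Fin (n + 1)), A :=
  TensorProduct.lift <|
    (PiTensorProduct.lift :
        MultilinearMap R (fun _ : Fin n => A) (⨂[R] (_ : Fin (n + 1)), A) ≃ₗ[R] _).toLinearMap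
      ∘ₗ MultilinearMap.curryLeft
          (PiTensorProduct.tprod R (s := fun _ : Fin (n + 1) => A))

/-- `x^{(a)} = 1 ⊗ ⋯ ⊗ x ⊗ ⋯ ⊗ 1 ∈ A^{⊗k}` with `x` in the `a`-th slot. -/
noncomputable def ins (k : ℕ) (a : Fin k) (x : A) : ⨂[R] (_ : Fin k), A :=
  tprod R fun i => if i = a then x else 1


lemma consStep_tmul (n : ℕ) (a : A) (m : Fin n → A) :
    consStep R A n (a ⊗ₜ[R] PiTensorProduct.tprod R m) = PiTensorProduct.tprod R (Fin.cons a m) := by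
  simp [consStep]

lemma ins_zero (n : ℕ) (x : A) :
    ins R A (n + 1) 0 x = PiTensorProduct.tprod R (Fin.cons x fun _ => 1) := by
  unfold ins
  refine congrArg (PiTensorProduct.tprod R) ?_
  ext i
  refine Fin.cases ?_ (fun j => ?_) i <;> simp [Fin.succ_ne_zero]

lemma ins_succ (n : ℕ) (a : Fin n) (x : A) :
    ins R A (n + 1) a.succ x =
      PiTensorProduct.tprod R (Fin.cons 1 fun i => if i = a then x else 1) := by
  unfold ins
  refine congrArg (PiTensorProduct.tprod R) ?_
  ext i
  refine Fin.cases ?_ (fun j => ?_) i <;>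
    simp [Fin.succ_ne_zero, (Fin.succ_ne_zero _).symm, Fin.succ_inj]

end

section

variable (R A : Type*) [CommRing R] [Ring A] [Bialgebra R A]

/-- The iterated coproduct `Δ^{(k+1)} : A → A^{⊗(k+1)}`; here `iterComul 0 = Δ^{(1)}` is
the canonical identification `A ≅ A^{⊗1}` and
`iterComul (k+1) = (id ⊗ Δ^{(k+1)}) ∘ Δ` (by coassociativity any placement gives the
same map). -/
noncomputable def iterComul : (k : ℕ) → (A →ₗ[R] ⨂[R] (_ : Fin (k + 1)), A)
  | 0 => consStep R A 0 ∘ₗ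
      (TensorProduct.mk R A (⨂[R] (_ : Fin 0), A)).flip (tprod R fun _ : Fin 0 => (1 : A))
  | (k + 1) => consStep R A (k + 1) ∘ₗ LinearMap.lTensor A (iterComul k) ∘ₗ
      Coalgebra.comul (R := R)

end

section

variable {R A : Type*} [CommRing R] [Ring A] [Bialgebra R A]

lemma iterComul_zero_apply (x : A) :
    iterComul R A 0 x = consStep R A 0 (x ⊗ₜ[R] tprod R fun _ : Fin 0 => (1 : A)) := rfl

lemma iterComul_succ_apply (k : ℕ) (x : A) :
    iterComul R A (k + 1) x =
      consStep R A (k + 1)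
        (LinearMap.lTensor A (iterComul R A k) (Coalgebra.comul (R := R) x)) := rfl

lemma iterComul_one (k : ℕ) :
    iterComul R A k 1 = tprod R fun _ : Fin (k + 1) => (1 : A) := by
  induction k with
  | zero =>
    rw [iterComul_zero_apply, consStep_tmul]
    refine congrArg (PiTensorProduct.tprod R) ?_
    ext i
    exact Fin.cases rfl (fun j => Fin.elim0 j) i
  | succ k ih =>
    rw [iterComul_succ_apply, Bialgebra.comul_one, Algebra.TensorProduct.one_def,
      LinearMap.lTensor_tmul, ih, consStep_tmul]
    refine congrArg (PiTensorProduct.tprod R) ?_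
    ext i
    exact Fin.cases rfl (fun j => rfl) i

lemma iterComul_primitive (k : ℕ) (x : A)
    (hx : Coalgebra.comul (R := R) x = x ⊗ₜ[R] 1 + 1 ⊗ₜ[R] x) :
    iterComul R A k x = ∑ a : Fin (k + 1), ins R A (k + 1) a x := by
  induction k with
  | zero =>
    rw [iterComul_zero_apply, consStep_tmul]
    rw [Fin.sum_univ_one, ins_zero]
  | succ k ih =>
    have h1 : ∀ a : Fin (k + 1),
        consStep R A (k + 1) ((1 : A) ⊗ₜ[R] ins R A (k + 1) a x) =
          ins R A (k + 1 + 1) a.succ x := by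
      intro a
      rw [ins_succ]
      unfold ins
      rw [consStep_tmul]
    rw [iterComul_succ_apply, hx, map_add, LinearMap.lTensor_tmul, LinearMap.lTensor_tmul,
      iterComul_one, ih, map_add, consStep_tmul, TensorProduct.tmul_sum, map_sum]
    simp_rw [h1]
    rw [Fin.sum_univ_succ (f := fun a => ins R A (k + 1 + 1) a x), ins_zero]

end

lemma pair_sum_succ {M : Type*} [AddCommMonoid M] (n : ℕ)
    (F : Fin (n + 2) → Fin (n + 2) → M) :
    ∑ p ∈ Finset.univ.filter (fun p : Fin (n + 2) × Fin (n + 2) => p.1 < p.2), F p.1 p.2 =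
      (∑ b : Fin (n + 1), F 0 b.succ) +
        ∑ p ∈ Finset.univ.filter (fun p : Fin (n + 1) × Fin (n + 1) => p.1 < p.2),
          F p.1.succ p.2.succ := by
  rw [Finset.sum_filter, Finset.sum_filter, Fintype.sum_prod_type, Fintype.sum_prod_type]
  rw [Fin.sum_univ_succ]
  simp [Fin.sum_univ_succ, Fin.succ_pos, Fin.succ_lt_succ_iff, Fin.not_lt_zero]


theorem stmt11 (R A : Type*) [CommRing R] [Ring A] [Bialgebra R A]
    (c : R) (e f t : A)
    (he : Coalgebra.comul (R := R) e = e ⊗ₜ[R] 1 + 1 ⊗ₜ[R] e)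
    (hf : Coalgebra.comul (R := R) f = f ⊗ₜ[R] 1 + 1 ⊗ₜ[R] f)
    (ht : Coalgebra.comul (R := R) t = t ⊗ₜ[R] 1 + 1 ⊗ₜ[R] t - c • (f ⊗ₜ[R] e)) :
    ∀ k : ℕ,
      iterComul R A k t =
        (∑ a : Fin (k + 1), ins R A (k + 1) a t) -
          c • ∑ p ∈ Finset.univ.filter (fun p : Fin (k + 1) × Fin (k + 1) => p.1 < p.2),
            ins R A (k + 1) p.1 f * ins R A (k + 1) p.2 e := by
  intro k
  induction k with
  | zero =>
    have hempty : (Finset.univ.filter (fun p : Fin 1 × Fin 1 => p.1 < p.2)) = ∅ := by decide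
    rw [hempty, Finset.sum_empty, smul_zero, sub_zero, Fin.sum_univ_one,
      iterComul_zero_apply, consStep_tmul, ins_zero]
  | succ k ih =>
    have h1 : ∀ (a : Fin (k + 1)) (y : A),
        consStep R A (k + 1) ((1 : A) ⊗ₜ[R] ins R A (k + 1) a y) =
          ins R A (k + 1 + 1) a.succ y := by
      intro a y
      rw [ins_succ]
      unfold ins
      rw [consStep_tmul]
    have hmul : ∀ (a b : Fin (k + 1)) (y z : A),
        consStep R A (k + 1)
            ((1 : A) ⊗ₜ[R] (ins R A (k + 1) a y * ins R A (k + 1) b z)) =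
          ins R A (k + 1 + 1) a.succ y * ins R A (k + 1 + 1) b.succ z := by
      intro a b y z
      unfold ins
      rw [tprod_mul_tprod, consStep_tmul, tprod_mul_tprod]
      congr 1
      ext i
      refine Fin.cases ?_ (fun j => ?_) i <;>
        simp [Fin.succ_ne_zero, (Fin.succ_ne_zero _).symm, Fin.succ_inj]
    have hfe : ∀ b : Fin (k + 1),
        consStep R A (k + 1) (f ⊗ₜ[R] ins R A (k + 1) b e) =
          ins R A (k + 1 + 1) 0 f * ins R A (k + 1 + 1) b.succ e := by
      intro b
      unfold ins
      rw [consStep_tmul, tprod_mul_tprod]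
      congr 1
      ext i
      refine Fin.cases ?_ (fun j => ?_) i <;>
        simp [Fin.succ_ne_zero, (Fin.succ_ne_zero _).symm, Fin.succ_inj]
    rw [iterComul_succ_apply, ht, map_sub, map_add, map_sub, map_add,
      LinearMap.lTensor_tmul, LinearMap.lTensor_tmul, LinearMap.map_smul,
      LinearMap.map_smul, LinearMap.lTensor_tmul,
      iterComul_one, consStep_tmul, ← ins_zero,
      iterComul_primitive k e he, TensorProduct.tmul_sum, map_sum]
    simp_rw [hfe]
    rw [ih, TensorProduct.tmul_sub, TensorProduct.tmul_smul, map_sub, LinearMap.map_smul,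
      TensorProduct.tmul_sum, map_sum, TensorProduct.tmul_sum, map_sum]
    simp_rw [h1, hmul]
    rw [Fin.sum_univ_succ (f := fun a => ins R A (k + 1 + 1) a t),
      pair_sum_succ k (fun a b => ins R A (k + 1 + 1) a f * ins R A (k + 1 + 1) b e),
      smul_add]
    abel
end

section
/- Let A be an associative algebra over a field k and let r ∈ A ⊗ A satisfy the classical Yang–Baxter equation [r₁₂, r₂₃] + [r₁₂, r₁₃] + [r₁₃, r₂₃] = 0 in A⊗A⊗A. Define g₊ ⊆ A to be the linear span of { (1 ⊗ f)(r) : f ∈ A* }, i.e. the span of all elements Σᵢ f(bᵢ)·aᵢ where r = Σᵢ aᵢ⊗bᵢ. Then g₊ is closed under the commutator bracket [x,y] = xy − yx, i.e. g₊ is a Lie subalgebra of A. -/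
open scoped TensorProduct

/-- `r₁₂ = Σ aᵢ ⊗ bᵢ ⊗ 1` in `(A ⊗ A) ⊗ A`. -/
noncomputable def r12 {k A : Type*} [Field k] [Ring A] [Algebra k A]
    (r : A ⊗[k] A) : (A ⊗[k] A) ⊗[k] A :=
  r ⊗ₜ[k] (1 : A)

/-- `r₁₃ = Σ aᵢ ⊗ 1 ⊗ bᵢ` in `(A ⊗ A) ⊗ A`. -/
noncomputable def r13 {k A : Type*} [Field k] [Ring A] [Algebra k A]
    (r : A ⊗[k] A) : (A ⊗[k] A) ⊗[k] A :=
  LinearMap.rTensor A (Algebra.TensorProduct.includeLeft (S := k)).toLinearMap r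

/-- `r₂₃ = Σ 1 ⊗ aᵢ ⊗ bᵢ` in `(A ⊗ A) ⊗ A`. -/
noncomputable def r23 {k A : Type*} [Field k] [Ring A] [Algebra k A]
    (r : A ⊗[k] A) : (A ⊗[k] A) ⊗[k] A :=
  LinearMap.rTensor A (Algebra.TensorProduct.includeRight (R := k)).toLinearMap r

/-- `g₊` : the span of the elements `(1 ⊗ f)(r)`, `f ∈ A*`. -/
noncomputable def gPlus {k A : Type*} [Field k] [Ring A] [Algebra k A]
    (r : A ⊗[k] A) : Submodule k A :=
  Submodule.span k
    (Set.range fun f : Module.Dual k A => TensorProduct.rid k A (LinearMap.lTensor A f r))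

section Aux

variable {k A : Type*} [Field k] [Ring A] [Algebra k A]

/-- `ψ f = (1 ⊗ f)` : contract the right factor with `f`. -/
noncomputable def psi (f : Module.Dual k A) : A ⊗[k] A →ₗ[k] A :=
  (TensorProduct.rid k A).toLinearMap ∘ₗ LinearMap.lTensor A f

/-- `F f g = 1 ⊗ f ⊗ g` : contract the last two factors. -/
noncomputable def Fmap (f g : Module.Dual k A) : (A ⊗[k] A) ⊗[k] A →ₗ[k] A :=
  psi g ∘ₗ LinearMap.rTensor A (psi f)

/-- `f ⊗ g` as a functional on `A ⊗ A`. -/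
noncomputable def fg (f g : Module.Dual k A) : A ⊗[k] A →ₗ[k] k :=
  (TensorProduct.lid k k).toLinearMap ∘ₗ TensorProduct.map f g

@[simp] lemma psi_tmul (f : Module.Dual k A) (a b : A) :
    psi f (a ⊗ₜ[k] b) = f b • a := by
  simp [psi]

@[simp] lemma fg_tmul (f g : Module.Dual k A) (a b : A) :
    fg f g (a ⊗ₜ[k] b) = f a * g b := by
  simp [fg]

@[simp] lemma r12_tmul (a b : A) : r12 (a ⊗ₜ[k] b) = (a ⊗ₜ[k] b) ⊗ₜ[k] (1 : A) := rfl

@[simp] lemma r13_tmul (a b : A) : r13 (a ⊗ₜ[k] b) = (a ⊗ₜ[k] (1 : A)) ⊗ₜ[k] b := rfl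

@[simp] lemma r23_tmul (a b : A) : r23 (a ⊗ₜ[k] b) = ((1 : A) ⊗ₜ[k] a) ⊗ₜ[k] b := rfl

@[simp] lemma r12_zero : r12 (0 : A ⊗[k] A) = 0 := by simp [r12]
@[simp] lemma r13_zero : r13 (0 : A ⊗[k] A) = 0 := by simp [r13]
@[simp] lemma r23_zero : r23 (0 : A ⊗[k] A) = 0 := by simp [r23]

@[simp] lemma r12_add (s t : A ⊗[k] A) : r12 (s + t) = r12 s + r12 t := by
  simp [r12, TensorProduct.add_tmul]
@[simp] lemma r13_add (s t : A ⊗[k] A) : r13 (s + t) = r13 s + r13 t := by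
  simp [r13]
@[simp] lemma r23_add (s t : A ⊗[k] A) : r23 (s + t) = r23 s + r23 t := by
  simp [r23]

noncomputable def h1 (f g : Module.Dual k A) (t : A ⊗[k] A) : Module.Dual k A :=
  fg f g ∘ₗ LinearMap.mulRight k t ∘ₗ
    (Algebra.TensorProduct.includeLeft (S := k) : A →ₐ[k] A ⊗[k] A).toLinearMap

noncomputable def h2 (f g : Module.Dual k A) (t : A ⊗[k] A) : Module.Dual k A :=
  fg f g ∘ₗ LinearMap.mulLeft k t ∘ₗ
    (Algebra.TensorProduct.includeLeft (S := k) : A →ₐ[k] A ⊗[k] A).toLinearMap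

noncomputable def h3 (f g : Module.Dual k A) (t : A ⊗[k] A) : Module.Dual k A :=
  fg f g ∘ₗ LinearMap.mulRight k t ∘ₗ
    (Algebra.TensorProduct.includeRight (R := k) : A →ₐ[k] A ⊗[k] A).toLinearMap

noncomputable def h4 (f g : Module.Dual k A) (t : A ⊗[k] A) : Module.Dual k A :=
  fg f g ∘ₗ LinearMap.mulLeft k t ∘ₗ
    (Algebra.TensorProduct.includeRight (R := k) : A →ₐ[k] A ⊗[k] A).toLinearMap

lemma eq1 (f g : Module.Dual k A) (s t : A ⊗[k] A) :
    Fmap f g (r12 s * r23 t) = psi (h1 f g t) s := by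
  induction s using TensorProduct.induction_on with
  | zero => simp
  | tmul a b =>
    induction t using TensorProduct.induction_on with
    | zero => simp [h1]
    | tmul c d =>
      simp [Fmap, h1, Algebra.TensorProduct.tmul_mul_tmul, smul_smul, mul_comm]
    | add t₁ t₂ ih₁ ih₂ =>
      simp only [r23_add, mul_add, map_add, ih₁, ih₂, h1]
      simp [mul_add, add_mul, add_smul]
  | add s₁ s₂ ih₁ ih₂ =>
    simp only [r12_add, add_mul, map_add, ih₁, ih₂]

lemma eq2 (f g : Module.Dual k A) (s t : A ⊗[k] A) :
    Fmap f g (r23 t * r12 s) = psi (h2 f g t) s := by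
  induction s using TensorProduct.induction_on with
  | zero => simp
  | tmul a b =>
    induction t using TensorProduct.induction_on with
    | zero => simp [h2]
    | tmul c d =>
      simp [Fmap, h2, Algebra.TensorProduct.tmul_mul_tmul, smul_smul, mul_comm]
    | add t₁ t₂ ih₁ ih₂ =>
      simp only [r23_add, add_mul, map_add, ih₁, ih₂, h2]
      simp [mul_add, add_mul, add_smul]
  | add s₁ s₂ ih₁ ih₂ =>
    simp only [r12_add, mul_add, map_add, ih₁, ih₂]

lemma eq3 (f g : Module.Dual k A) (s t : A ⊗[k] A) :
    Fmap f g (r13 s * r23 t) = psi (h3 f g t) s := by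
  induction s using TensorProduct.induction_on with
  | zero => simp
  | tmul a b =>
    induction t using TensorProduct.induction_on with
    | zero => simp [h3]
    | tmul c d =>
      simp [Fmap, h3, Algebra.TensorProduct.tmul_mul_tmul, smul_smul, mul_comm]
    | add t₁ t₂ ih₁ ih₂ =>
      simp only [r23_add, mul_add, map_add, ih₁, ih₂, h3]
      simp [mul_add, add_mul, add_smul]
  | add s₁ s₂ ih₁ ih₂ =>
    simp only [r13_add, add_mul, map_add, ih₁, ih₂]

lemma eq4 (f g : Module.Dual k A) (s t : A ⊗[k] A) :
    Fmap f g (r23 t * r13 s) = psi (h4 f g t) s := by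
  induction s using TensorProduct.induction_on with
  | zero => simp
  | tmul a b =>
    induction t using TensorProduct.induction_on with
    | zero => simp [h4]
    | tmul c d =>
      simp [Fmap, h4, Algebra.TensorProduct.tmul_mul_tmul, smul_smul, mul_comm]
    | add t₁ t₂ ih₁ ih₂ =>
      simp only [r23_add, add_mul, map_add, ih₁, ih₂, h4]
      simp [mul_add, add_mul, add_smul]
  | add s₁ s₂ ih₁ ih₂ =>
    simp only [r13_add, mul_add, map_add, ih₁, ih₂]

lemma eq5 (f g : Module.Dual k A) (s t : A ⊗[k] A) :
    Fmap f g (r12 s * r13 t) = psi f s * psi g t := by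
  induction s using TensorProduct.induction_on with
  | zero => simp
  | tmul a b =>
    induction t using TensorProduct.induction_on with
    | zero => simp
    | tmul c d =>
      simp [Fmap, Algebra.TensorProduct.tmul_mul_tmul, smul_smul, mul_comm,
        smul_mul_assoc, mul_smul_comm]
    | add t₁ t₂ ih₁ ih₂ =>
      simp only [r13_add, mul_add, map_add, ih₁, ih₂]
  | add s₁ s₂ ih₁ ih₂ =>
    simp only [r12_add, add_mul, map_add, ih₁, ih₂]

lemma eq6 (f g : Module.Dual k A) (s t : A ⊗[k] A) :
    Fmap f g (r13 t * r12 s) = psi g t * psi f s := by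
  induction s using TensorProduct.induction_on with
  | zero => simp
  | tmul a b =>
    induction t using TensorProduct.induction_on with
    | zero => simp
    | tmul c d =>
      simp [Fmap, Algebra.TensorProduct.tmul_mul_tmul, smul_smul, mul_comm,
        smul_mul_assoc, mul_smul_comm]
    | add t₁ t₂ ih₁ ih₂ =>
      simp only [r13_add, add_mul, map_add, ih₁, ih₂]
  | add s₁ s₂ ih₁ ih₂ =>
    simp only [r12_add, mul_add, map_add, ih₁, ih₂]

lemma psi_mem (f : Module.Dual k A) (r : A ⊗[k] A) : psi f r ∈ gPlus r :=
  Submodule.subset_span ⟨f, rfl⟩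

lemma key (f g : Module.Dual k A) (r : A ⊗[k] A)
    (hr : (r12 r * r23 r - r23 r * r12 r) + (r12 r * r13 r - r13 r * r12 r) +
        (r13 r * r23 r - r23 r * r13 r) = 0) :
    psi f r * psi g r - psi g r * psi f r ∈ gPlus r := by
  have h := congrArg (Fmap f g) hr
  simp only [map_add, map_sub, map_zero, eq1, eq2, eq3, eq4, eq5, eq6] at h
  have hre : psi f r * psi g r - psi g r * psi f r =
      psi (h2 f g r) r + psi (h4 f g r) r - psi (h1 f g r) r - psi (h3 f g r) r := by
    rw [← sub_eq_zero, ← h]; abel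
  rw [hre]
  exact sub_mem (sub_mem (add_mem (psi_mem _ r) (psi_mem _ r)) (psi_mem _ r)) (psi_mem _ r)

end Aux

theorem stmt13 (k A : Type*) [Field k] [Ring A] [Algebra k A] (r : A ⊗[k] A)
    (hr : (r12 r * r23 r - r23 r * r12 r) + (r12 r * r13 r - r13 r * r12 r) +
        (r13 r * r23 r - r23 r * r13 r) = 0) :
    ∀ x ∈ gPlus r, ∀ y ∈ gPlus r, x * y - y * x ∈ gPlus r := by
  intro x hx
  induction hx using Submodule.span_induction with
  | mem x hxm =>
    intro y hy
    induction hy using Submodule.span_induction with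
    | mem y hym =>
      obtain ⟨f, rfl⟩ := hxm
      obtain ⟨g, rfl⟩ := hym
      exact key f g r hr
    | zero => simp
    | add y z _ _ hy hz =>
      have : x * (y + z) - (y + z) * x = (x * y - y * x) + (x * z - z * x) := by noncomm_ring
      rw [this]; exact add_mem hy hz
    | smul c y _ hy =>
      have : x * (c • y) - (c • y) * x = c • (x * y - y * x) := by
        rw [mul_smul_comm, smul_mul_assoc, smul_sub]
      rw [this]; exact Submodule.smul_mem _ c hy
  | zero => intro y hy; simp
  | add x z _ _ hx hz =>
    intro y hy
    have : (x + z) * y - y * (x + z) = (x * y - y * x) + (z * y - y * z) := by noncomm_ring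
    rw [this]; exact add_mem (hx y hy) (hz y hy)
  | smul c x _ hx =>
    intro y hy
    have : (c • x) * y - y * (c • x) = c • (x * y - y * x) := by
      rw [mul_smul_comm, smul_mul_assoc, smul_sub]
    rw [this]; exact Submodule.smul_mem _ c (hx y hy)
end
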